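/- arXiv:2411.01563 — 3 statements merged into one kernel-verified Lean document; each statement's English description precedes it below -/
import Mathlib

section
/- Let $D \subseteq \mathbb{R}^d$ be a bounded measurable set, $\beta \in (0,1]$, and $c_\beta, C_0, C_1 > 0$. Suppose $p_0 \colon D \to [0,\infty)$ satisfies $|p_0(x)-p_0(y)| \le c_\beta |x-y|^\beta$ for all $x,y \in D$, and for each $t \in (0,1]$ let $q_t \colon D \times D \to [0,\infty)$ be a symmetric probability transition kernel density satisfying the Gaussian bound $q_t(x,y) \le C_0 t^{-d/2} \exp(-C_1 |x-y|^2/t)$ for all $x,y \in D$. Define $p_t(x) = \int_D p_0(y) q_t(x,y)\,dy$. Then there is a constant $C$ depending only on $d, \beta, c_\beta, C_0, C_1$ and $\mathrm{Leb}(D)$ such that $\frac{1}{2}\int_D |p_t(x)-p_0(x)|\,dx \le C t^{\beta/2}$ for all $t \in (0,1]$. -/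
open MeasureTheory Set Real

-- scalar inequality
lemma aux_scalar_u (C1 u β : ℝ) (hC1 : 0 < C1) (hu : 0 ≤ u) (hβ0 : 0 < β) (hβ1 : β ≤ 1) :
    u ^ β * Real.exp (-C1 * u ^ 2) ≤ (2 + 2 / C1) * Real.exp (-(C1 / 2) * u ^ 2) := by
  have h1 : u ^ β ≤ 1 + u := by
    rcases le_or_gt u 1 with h | h
    · have := Real.rpow_le_one hu h hβ0.le
      linarith
    · calc u ^ β ≤ u ^ (1:ℝ) := Real.rpow_le_rpow_of_exponent_le h.le hβ1
        _ = u := Real.rpow_one u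
        _ ≤ 1 + u := by linarith
  set s := C1 / 2 * u ^ 2 with hs
  have hs0 : 0 ≤ s := by positivity
  have hE1 : 1 ≤ Real.exp s := Real.one_le_exp hs0
  have hsE : s ≤ Real.exp s := (Real.add_one_le_exp s).trans' (by linarith)
  have hu2 : u ^ 2 = 2 / C1 * s := by field_simp [hs]; ring
  have h2 : (1 + u) * Real.exp (-s) ≤ 2 + 2 / C1 := by
    rw [Real.exp_neg]
    rw [mul_inv_le_iff₀ (Real.exp_pos s)]
    have hu1 : u ≤ 1 + u ^ 2 := by nlinarith
    have hq : 2 / C1 * s ≤ 2 / C1 * Real.exp s := by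
      have : (0:ℝ) ≤ 2 / C1 := by positivity
      exact mul_le_mul_of_nonneg_left hsE this
    nlinarith [hE1, hq]
  have hEeq : Real.exp (-C1 * u ^ 2) = Real.exp (-s) * Real.exp (-s) := by
    rw [← Real.exp_add]; congr 1; rw [hs]; ring
  have hexpnn : 0 ≤ Real.exp (-s) := (Real.exp_pos _).le
  calc u ^ β * Real.exp (-C1 * u ^ 2)
      ≤ (1 + u) * Real.exp (-C1 * u ^ 2) := by
        apply mul_le_mul_of_nonneg_right h1 (Real.exp_pos _).le
    _ = ((1 + u) * Real.exp (-s)) * Real.exp (-s) := by rw [hEeq]; ring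
    _ ≤ (2 + 2 / C1) * Real.exp (-s) := by
        apply mul_le_mul_of_nonneg_right h2 hexpnn
    _ = (2 + 2 / C1) * Real.exp (-(C1 / 2) * u ^ 2) := by rw [hs]; ring_nf

lemma aux_scalar (C1 t r β : ℝ) (hC1 : 0 < C1) (ht : 0 < t) (hr : 0 ≤ r)
    (hβ0 : 0 < β) (hβ1 : β ≤ 1) :
    r ^ β * Real.exp (-C1 * r ^ 2 / t) ≤
      (2 + 2 / C1) * t ^ (β / 2) * Real.exp (-(C1 / (2 * t)) * r ^ 2) := by
  set u := r / Real.sqrt t with hudef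
  have hst : (0:ℝ) < Real.sqrt t := Real.sqrt_pos.2 ht
  have hu : 0 ≤ u := by positivity
  have hru : r = Real.sqrt t * u := by rw [hudef]; field_simp
  have hu2 : u ^ 2 = r ^ 2 / t := by
    rw [hudef, div_pow, Real.sq_sqrt ht.le]
  have hrβ : r ^ β = t ^ (β / 2) * u ^ β := by
    rw [hru, Real.mul_rpow hst.le hu, Real.sqrt_eq_rpow, ← Real.rpow_mul ht.le]
    rw [show (1/2) * β = β/2 by ring]
  have key := aux_scalar_u C1 u β hC1 hu hβ0 hβ1
  have e1 : -C1 * u ^ 2 = -C1 * r ^ 2 / t := by rw [hu2]; ring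
  have e2 : -(C1 / 2) * u ^ 2 = -(C1 / (2 * t)) * r ^ 2 := by
    rw [hu2]; field_simp
  rw [e1, e2] at key
  calc r ^ β * Real.exp (-C1 * r ^ 2 / t)
      = t ^ (β / 2) * (u ^ β * Real.exp (-C1 * r ^ 2 / t)) := by rw [hrβ]; ring
    _ ≤ t ^ (β / 2) * ((2 + 2 / C1) * Real.exp (-(C1 / (2 * t)) * r ^ 2)) := by
        apply mul_le_mul_of_nonneg_left key (Real.rpow_nonneg ht.le _)
    _ = (2 + 2 / C1) * t ^ (β / 2) * Real.exp (-(C1 / (2 * t)) * r ^ 2) := by ring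

lemma aux_integrable_gauss (d : ℕ) (b : ℝ) (hb : 0 < b) :
    Integrable (fun z : EuclideanSpace ℝ (Fin d) => Real.exp (-b * ‖z‖ ^ 2)) := by
  have h := GaussianFourier.integrable_cexp_neg_mul_sq_norm_add (V := EuclideanSpace ℝ (Fin d))
    (b := (b:ℂ)) (by simpa using hb) 0 0
  have := h.norm
  refine this.congr (Filter.Eventually.of_forall fun v => ?_)
  simp [Complex.norm_exp]
  left
  norm_cast

lemma aux_integral_gauss (d : ℕ) (b : ℝ) (hb : 0 < b) :
    ∫ z : EuclideanSpace ℝ (Fin d), Real.exp (-b * ‖z‖ ^ 2) =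
      (Real.pi / b) ^ ((d : ℝ) / 2) := by
  rw [GaussianFourier.integral_rexp_neg_mul_sq_norm hb]
  simp [finrank_euclideanSpace_fin]

/-- Early-stopping total variation bound: if `p0` is `β`-Hölder on a bounded
measurable set `D` and `q t` is a symmetric probability transition kernel density
on `D` satisfying a Gaussian upper bound, then the total variation distance between
`p_t = ∫ p0 y * q t x y dy` and `p0` is bounded by `C * t^(β/2)`. -/
theorem early_stopping_tv_bound
    (d : ℕ) (D : Set (EuclideanSpace ℝ (Fin d)))
    (hDb : Bornology.IsBounded D) (hDm : MeasurableSet D)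
    (β c C0 C1 : ℝ) (hβ : β ∈ Set.Ioc (0:ℝ) 1) (hc : 0 < c) (hC0 : 0 < C0) (hC1 : 0 < C1)
    (p0 : EuclideanSpace ℝ (Fin d) → ℝ)
    (hp0nn : ∀ x ∈ D, 0 ≤ p0 x)
    (hHolder : ∀ x ∈ D, ∀ y ∈ D, |p0 x - p0 y| ≤ c * ‖x - y‖ ^ β)
    (q : ℝ → EuclideanSpace ℝ (Fin d) → EuclideanSpace ℝ (Fin d) → ℝ)
    (hqnn : ∀ t ∈ Set.Ioc (0:ℝ) 1, ∀ x ∈ D, ∀ y ∈ D, 0 ≤ q t x y)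
    (hqsym : ∀ t ∈ Set.Ioc (0:ℝ) 1, ∀ x ∈ D, ∀ y ∈ D, q t x y = q t y x)
    (hqprob : ∀ t ∈ Set.Ioc (0:ℝ) 1, ∀ x ∈ D, ∫ y in D, q t x y = 1)
    (hqgauss : ∀ t ∈ Set.Ioc (0:ℝ) 1, ∀ x ∈ D, ∀ y ∈ D,
      q t x y ≤ C0 * t ^ (-(d : ℝ) / 2) * Real.exp (-C1 * ‖x - y‖ ^ 2 / t)) :
    ∃ C : ℝ, 0 < C ∧ ∀ t ∈ Set.Ioc (0:ℝ) 1,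
      (1 / 2) * ∫ x in D, |(∫ y in D, p0 y * q t x y) - p0 x| ≤ C * t ^ (β / 2) := by
  obtain ⟨hβ0, hβ1⟩ := hβ
  obtain ⟨R, hR⟩ := Metric.isBounded_iff.1 hDb
  set R' := max R 0 with hR'def
  have hR0 : (0:ℝ) ≤ R' := le_max_right _ _
  have hR' : ∀ x ∈ D, ∀ y ∈ D, ‖x - y‖ ≤ R' := by
    intro x hx y hy
    rw [← dist_eq_norm]
    exact le_max_of_le_left (hR hx hy)
  set A := 2 + 2 / C1 with hA
  have hApos : 0 < A := by positivity
  set B := (2 * Real.pi / C1) ^ ((d:ℝ)/2) with hB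
  have hBpos : 0 < B := Real.rpow_pos_of_pos (by positivity) _
  set K := c * C0 * A * B with hK
  have hKpos : 0 < K := by positivity
  have hμ : volume D < ⊤ := hDb.measure_lt_top
  set μD := (volume D).toReal with hμDdef
  have hμD0 : 0 ≤ μD := ENNReal.toReal_nonneg
  refine ⟨μD * K + 1, by positivity, ?_⟩
  intro t ht
  obtain ⟨ht0, ht1⟩ := ht
  have htβ : 0 ≤ t ^ (β/2) := Real.rpow_nonneg ht0.le _
  -- continuity of p0 on D
  have hcont : ContinuousOn p0 D := by
    intro z hz
    have h2 : Filter.Tendsto (fun y : EuclideanSpace ℝ (Fin d) => ‖y - z‖)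
        (nhdsWithin z D) (nhds 0) := by
      have h2' : Filter.Tendsto (fun y : EuclideanSpace ℝ (Fin d) => ‖y - z‖)
          (nhds z) (nhds 0) := by
        simpa using (continuous_id.sub (continuous_const (y := z))).norm.tendsto z
      exact h2'.mono_left nhdsWithin_le_nhds
    have h3 : ContinuousAt (fun s : ℝ => s ^ β) 0 :=
      Real.continuousAt_rpow_const 0 β (Or.inr hβ0.le)
    have h4 := (h3.tendsto.comp h2)
    rw [Real.zero_rpow hβ0.ne'] at h4
    have h1 : Filter.Tendsto (fun y : EuclideanSpace ℝ (Fin d) => c * ‖y - z‖ ^ β)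
        (nhdsWithin z D) (nhds 0) := by
      simpa using h4.const_mul c
    rw [ContinuousWithinAt, tendsto_iff_dist_tendsto_zero]
    apply squeeze_zero' (Filter.Eventually.of_forall fun y => dist_nonneg) ?_ h1
    filter_upwards [self_mem_nhdsWithin] with y hy
    rw [Real.dist_eq]
    exact hHolder y hy z hz
  have hp0sm : AEStronglyMeasurable p0 (volume.restrict D) :=
    (hcont.aemeasurable hDm).aestronglyMeasurable
  -- pointwise bound
  have hptwise : ∀ x ∈ D, |(∫ y in D, p0 y * q t x y) - p0 x| ≤ K * t ^ (β/2) := by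
    intro x hx
    set b := C1 / (2 * t) with hb
    have hbpos : 0 < b := by positivity
    have hqi : IntegrableOn (fun y => q t x y) D := by
      by_contra h
      have h1 := hqprob t ⟨ht0, ht1⟩ x hx
      rw [integral_undef h] at h1
      norm_num at h1
    have hqsm := hqi.aestronglyMeasurable
    set M := p0 x + c * R' ^ β with hM
    have hM0 : 0 ≤ M := by
      have h0 := hp0nn x hx
      have : (0:ℝ) ≤ R' ^ β := Real.rpow_nonneg hR0 _
      nlinarith
    have hp0bd : ∀ y ∈ D, |p0 y| ≤ M := by
      intro y hy
      have h1 := hHolder y hy x hx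
      have h3 : ‖y - x‖ ^ β ≤ R' ^ β :=
        Real.rpow_le_rpow (norm_nonneg _) (hR' y hy x hx) hβ0.le
      have h4 : p0 y - p0 x ≤ |p0 y - p0 x| := le_abs_self _
      have h5 : c * ‖y - x‖ ^ β ≤ c * R' ^ β := mul_le_mul_of_nonneg_left h3 hc.le
      rw [abs_of_nonneg (hp0nn y hy), hM]
      linarith
    have hPQint : IntegrableOn (fun y => p0 y * q t x y) D := by
      have hm : AEStronglyMeasurable (fun y => p0 y * q t x y) (volume.restrict D) :=
        hp0sm.mul hqsm
      apply Integrable.mono (hqi.const_mul M) hm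
      filter_upwards [ae_restrict_mem hDm] with y hy
      have hq0 := hqnn t ⟨ht0, ht1⟩ x hx y hy
      simp only [Real.norm_eq_abs, abs_mul, abs_of_nonneg hq0, abs_of_nonneg hM0]
      exact mul_le_mul_of_nonneg_right (hp0bd y hy) hq0
    have h1 : p0 x = ∫ y in D, p0 x * q t x y := by
      rw [integral_const_mul, hqprob t ⟨ht0, ht1⟩ x hx, mul_one]
    have hdiff : (∫ y in D, p0 y * q t x y) - p0 x = ∫ y in D, (p0 y - p0 x) * q t x y := by
      calc (∫ y in D, p0 y * q t x y) - p0 x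
          = (∫ y in D, p0 y * q t x y) - ∫ y in D, p0 x * q t x y := by rw [← h1]
        _ = ∫ y in D, (p0 y * q t x y - p0 x * q t x y) :=
            (integral_sub hPQint (hqi.const_mul _)).symm
        _ = ∫ y in D, (p0 y - p0 x) * q t x y := by
            apply integral_congr_ae
            filter_upwards with y
            ring
    have hGint : Integrable (fun z : EuclideanSpace ℝ (Fin d) => Real.exp (-b * ‖z‖^2)) :=
      aux_integrable_gauss d b hbpos
    have hGx : Integrable (fun y : EuclideanSpace ℝ (Fin d) => Real.exp (-b * ‖x - y‖^2)) :=
      (integrable_comp_sub_left (fun z => Real.exp (-b * ‖z‖^2)) x).2 hGint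
    set K2 := c * C0 * A * t^(β/2) * t^(-(d:ℝ)/2) with hK2
    have hK2' : 0 ≤ K2 := by
      have : (0:ℝ) ≤ t^(-(d:ℝ)/2) := Real.rpow_nonneg ht0.le _
      have := hApos
      positivity
    have hbound : ∀ y ∈ D, |(p0 y - p0 x) * q t x y| ≤ K2 * Real.exp (-b * ‖x - y‖^2) := by
      intro y hy
      have hq0 := hqnn t ⟨ht0, ht1⟩ x hx y hy
      rw [abs_mul, abs_of_nonneg hq0]
      have hh1 : |p0 y - p0 x| ≤ c * ‖x - y‖ ^ β := by
        rw [abs_sub_comm]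
        exact hHolder x hx y hy
      have hh2 := hqgauss t ⟨ht0, ht1⟩ x hx y hy
      have hr0 : (0:ℝ) ≤ ‖x - y‖ := norm_nonneg _
      have htd : (0:ℝ) ≤ t ^ (-(d:ℝ)/2) := Real.rpow_nonneg ht0.le _
      have step1 : |p0 y - p0 x| * q t x y ≤
          (c * ‖x - y‖ ^ β) * (C0 * t ^ (-(d:ℝ)/2) * Real.exp (-C1 * ‖x - y‖^2 / t)) := by
        apply mul_le_mul hh1 hh2 hq0
        positivity
      have step2 := aux_scalar C1 t ‖x - y‖ β hC1 ht0 hr0 hβ0 hβ1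
      calc |p0 y - p0 x| * q t x y
          ≤ (c * ‖x - y‖ ^ β) * (C0 * t ^ (-(d:ℝ)/2) * Real.exp (-C1 * ‖x - y‖^2 / t)) := step1
        _ = (c * C0 * t ^ (-(d:ℝ)/2)) * (‖x - y‖ ^ β * Real.exp (-C1 * ‖x - y‖^2 / t)) := by
            ring
        _ ≤ (c * C0 * t ^ (-(d:ℝ)/2)) *
            ((2 + 2 / C1) * t ^ (β/2) * Real.exp (-(C1 / (2 * t)) * ‖x - y‖^2)) := by
            apply mul_le_mul_of_nonneg_left step2
            positivity
        _ = K2 * Real.exp (-b * ‖x - y‖^2) := by rw [hK2, hA, hb]; ring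
    have habs : |∫ y in D, (p0 y - p0 x) * q t x y| ≤ ∫ y in D, |(p0 y - p0 x) * q t x y| := by
      simpa only [Real.norm_eq_abs] using
        norm_integral_le_integral_norm (μ := volume.restrict D)
          (fun y => (p0 y - p0 x) * q t x y)
    have hmono : (∫ y in D, |(p0 y - p0 x) * q t x y|) ≤
        ∫ y in D, K2 * Real.exp (-b * ‖x - y‖^2) := by
      apply integral_mono_of_nonneg
      · exact Filter.Eventually.of_forall fun y => abs_nonneg _
      · exact (hGx.const_mul K2).integrableOn
      · filter_upwards [ae_restrict_mem hDm] with y hy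
        exact hbound y hy
    have hext : (∫ y in D, K2 * Real.exp (-b * ‖x - y‖^2)) ≤
        ∫ y, K2 * Real.exp (-b * ‖x - y‖^2) := by
      apply setIntegral_le_integral (hGx.const_mul K2)
      filter_upwards with y
      positivity
    have hval : (∫ y : EuclideanSpace ℝ (Fin d), K2 * Real.exp (-b * ‖x - y‖^2)) =
        K2 * (Real.pi / b) ^ ((d:ℝ)/2) := by
      rw [integral_const_mul]
      congr 1
      have htr := integral_sub_left_eq_self
        (fun z : EuclideanSpace ℝ (Fin d) => Real.exp (-b * ‖z‖^2)) volume x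
      rw [htr, aux_integral_gauss d b hbpos]
    have hfinal : K2 * (Real.pi / b) ^ ((d:ℝ)/2) = K * t ^ (β/2) := by
      have hπb : Real.pi / b = (2 * Real.pi / C1) * t := by
        rw [hb]; field_simp
      rw [hπb, Real.mul_rpow (by positivity) ht0.le, hK2, hK, hB]
      have htt : t ^ (-(d:ℝ)/2) * t ^ ((d:ℝ)/2) = 1 := by
        rw [← Real.rpow_add ht0, show -(d:ℝ)/2 + (d:ℝ)/2 = 0 by ring, Real.rpow_zero]
      linear_combination (c * C0 * A * (2 * Real.pi / C1) ^ ((d:ℝ)/2) * t ^ (β/2)) * htt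
    rw [hdiff]
    calc |∫ y in D, (p0 y - p0 x) * q t x y|
        ≤ ∫ y in D, |(p0 y - p0 x) * q t x y| := habs
      _ ≤ ∫ y in D, K2 * Real.exp (-b * ‖x - y‖^2) := hmono
      _ ≤ ∫ y, K2 * Real.exp (-b * ‖x - y‖^2) := hext
      _ = K2 * (Real.pi / b) ^ ((d:ℝ)/2) := hval
      _ = K * t ^ (β/2) := hfinal
  -- final integration
  have hconst : IntegrableOn (fun _ : EuclideanSpace ℝ (Fin d) => K * t^(β/2)) D :=
    integrableOn_const hμ.ne
  have h2 : (∫ x in D, |(∫ y in D, p0 y * q t x y) - p0 x|) ≤ ∫ _x in D, K * t^(β/2) := by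
    apply integral_mono_of_nonneg (Filter.Eventually.of_forall fun x => abs_nonneg _) hconst
    filter_upwards [ae_restrict_mem hDm] with x hx
    exact hptwise x hx
  rw [setIntegral_const, smul_eq_mul, measureReal_def, ← hμDdef] at h2
  have hKt : 0 ≤ μD * (K * t ^ (β/2)) := by positivity
  nlinarith [mul_nonneg (mul_nonneg hμD0 hKpos.le) htβ, htβ, h2]
end

section
/- For every $C \ge 1$ and $m \in \mathbb{N}$, there exists a ReLU neural network $\varphi \colon \mathbb{R}^2 \to \mathbb{R}$ with at most $m + 8$ hidden layers, all layer widths at most $12$, at most $58 + 16m$ nonzero parameters, all parameters bounded in absolute value by $C$, such that $|\varphi(x,y) - xy| \le C 2^{-m}$ for all $x \in [0,1]$ and $y \in [-C, C]$, and moreover $\varphi(0,y) = \varphi(x,0) = 0$ for all $x, y$. -/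
open scoped Classical
open Matrix

/-- A feedforward ReLU neural network `A_L σ_{b_L} A_{L-1} ⋯ A_1 σ_{b_1} A_0` with
`L` hidden layers, layer widths `width 0, …, width (L+1)` (input and output included),
weight matrices `A i` for `i = 0, …, L` and shift vectors `b i` (the paper's `b_{i+1}`)
for `i = 0, …, L-1`. -/
structure ReluNet (din dout : ℕ) where
  L : ℕ
  width : ℕ → ℕ
  hin : width 0 = din
  hout : width (L + 1) = dout
  A : (i : ℕ) → Matrix (Fin (width (i + 1))) (Fin (width i)) ℝ
  b : (i : ℕ) → Fin (width (i + 1)) → ℝ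

namespace ReluNet

variable {din dout : ℕ}

/-- The value of the network at layer `i`, starting from input `x`:
`forward x 0 = x`, `forward x 1 = A 0 x`, and
`forward x (i+2) = A (i+1) (σ_{b i}(forward x (i+1)))` where `σ_b(v)_j = max (v_j - b_j) 0`. -/
def forward (net : ReluNet din dout) (x : Fin (net.width 0) → ℝ) :
    (i : ℕ) → Fin (net.width i) → ℝ
  | 0 => x
  | 1 => net.A 0 *ᵥ x
  | (i + 2) => net.A (i + 1) *ᵥ fun j => max (net.forward x (i + 1) j - net.b i j) 0

/-- The function computed by the network. -/
def eval (net : ReluNet din dout) (x : Fin din → ℝ) : Fin dout → ℝ :=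
  fun j => net.forward (fun k => x (Fin.cast net.hin k)) (net.L + 1) (Fin.cast net.hout.symm j)

/-- The sparsity of the network: total number of nonzero entries of the `A i`'s
and `b i`'s. -/
noncomputable def sparsity (net : ReluNet din dout) : ℕ :=
  (∑ i ∈ Finset.range (net.L + 1),
      (Finset.univ.filter fun p : Fin (net.width (i + 1)) × Fin (net.width i) =>
        net.A i p.1 p.2 ≠ 0).card)
    + ∑ i ∈ Finset.range net.L,
        (Finset.univ.filter fun j : Fin (net.width (i + 1)) => net.b i j ≠ 0).card

/-- All parameters of the network are bounded by `B` in absolute value. -/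
def paramBound (net : ReluNet din dout) (B : ℝ) : Prop :=
  (∀ i, i ≤ net.L → ∀ j k, |net.A i j k| ≤ B) ∧
    (∀ i, i < net.L → ∀ j, |net.b i j| ≤ B)

end ReluNet



noncomputable section

/-- ReLU -/
def mnSig (a : ℝ) : ℝ := max a 0

/-- scaled tent iterates: `mnH j u = g^{∘j}(u)/4^j` on `[0,1]`. -/
def mnH : ℕ → ℝ → ℝ
  | 0, u => u
  | (j+1), u => mnSig (mnH j u) / 2 - mnSig (mnH j u - (1/4)^j * (1/2))

/-- accumulator channel -/
def mnP (C a b : ℝ) : ℕ → ℝ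
  | 0 => 0
  | (j+1) => mnSig (mnP C a b j) + C * mnSig (mnH j a) + C * mnSig (mnH j b)

def mnG (u : ℝ) : ℝ := 2*u - 4 * mnSig (u - 1/2)

lemma mnG_mem {u : ℝ} (h0 : 0 ≤ u) (h1 : u ≤ 1) : 0 ≤ mnG u ∧ mnG u ≤ 1 := by
  unfold mnG mnSig
  rcases le_total (u - 1/2) 0 with h | h
  · rw [max_eq_right h]; constructor <;> linarith
  · rw [max_eq_left h]; constructor <;> linarith

lemma mnSig_div4 (a : ℝ) : mnSig (a/4) = mnSig a / 4 := by
  unfold mnSig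
  rcases le_total a 0 with h | h
  · rw [max_eq_right h, max_eq_right (by linarith)]; norm_num
  · rw [max_eq_left h, max_eq_left (by linarith)]

lemma mnH_scale : ∀ (j : ℕ) (u : ℝ), 0 ≤ u → u ≤ 1 → mnH (j+1) u = mnH j (mnG u) / 4 := by
  intro j
  induction j with
  | zero =>
    intro u h0 h1
    show mnSig (mnH 0 u) / 2 - mnSig (mnH 0 u - (1/4)^0 * (1/2)) = mnH 0 (mnG u) / 4
    unfold mnH mnG mnSig
    rw [max_eq_left h0]
    rcases le_total (u - 1/2) 0 with h | h
    · rw [max_eq_right h, max_eq_right (by norm_num; linarith)]; ring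
    · rw [max_eq_left h, max_eq_left (by norm_num; linarith)]; ring
  | succ j ih =>
    intro u h0 h1
    show mnSig (mnH (j+1) u) / 2 - mnSig (mnH (j+1) u - (1/4)^(j+1) * (1/2))
        = mnH (j+1) (mnG u) / 4
    rw [ih u h0 h1]
    have h4 : mnH j (mnG u) / 4 - (1/4)^(j+1) * (1/2)
        = (mnH j (mnG u) - (1/4)^j * (1/2)) / 4 := by ring
    rw [h4, mnSig_div4, mnSig_div4]
    show _ = (mnSig (mnH j (mnG u)) / 2 - mnSig (mnH j (mnG u) - (1/4)^j * (1/2))) / 4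
    ring
  

lemma mnH_bounds : ∀ (j : ℕ) (u : ℝ), 0 ≤ u → u ≤ 1 → 0 ≤ mnH j u ∧ mnH j u ≤ 1 := by
  intro j
  induction j with
  | zero => intro u h0 h1; exact ⟨h0, h1⟩
  | succ j ih =>
    intro u h0 h1
    rw [mnH_scale j u h0 h1]
    obtain ⟨hg0, hg1⟩ := mnG_mem h0 h1
    obtain ⟨ha, hb⟩ := ih (mnG u) hg0 hg1
    constructor <;> linarith

lemma mnH_sum : ∀ (K : ℕ) (u : ℝ), 0 ≤ u → u ≤ 1 →
    ∃ e : ℝ, 0 ≤ e ∧ e ≤ (1/4)^K * (1/4) ∧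
      ∑ i ∈ Finset.range (K+1), mnH i u = 2*u - u^2 - e := by
  intro K
  induction K with
  | zero =>
    intro u h0 h1
    refine ⟨u - u^2, by nlinarith, by nlinarith [sq_nonneg (u - 1/2)], ?_⟩
    simp [mnH]; ring
  | succ K ih =>
    intro u h0 h1
    obtain ⟨hg0, hg1⟩ := mnG_mem h0 h1
    obtain ⟨e, he0, he1, hs⟩ := ih (mnG u) hg0 hg1
    refine ⟨e/4, by linarith, by rw [pow_succ]; linarith, ?_⟩
    rw [Finset.sum_range_succ']
    have : ∀ i ∈ Finset.range (K+1), mnH (i+1) u = mnH i (mnG u) / 4 := by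
      intro i _; exact mnH_scale i u h0 h1
    rw [Finset.sum_congr rfl this, ← Finset.sum_div, hs]
    show (2 * mnG u - mnG u ^ 2 - e) / 4 + mnH 0 u = _
    unfold mnH mnG mnSig
    rcases le_total (u - 1/2) 0 with h | h
    · rw [max_eq_right h]; ring
    · rw [max_eq_left h]; ring

lemma mnP_closed {C a b : ℝ} (hC : 0 ≤ C) (ha0 : 0 ≤ a) (ha1 : a ≤ 1)
    (hb0 : 0 ≤ b) (hb1 : b ≤ 1) :
    ∀ j : ℕ, mnP C a b j = C * ∑ i ∈ Finset.range j, (mnH i a + mnH i b) := by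
  intro j
  induction j with
  | zero => simp [mnP]
  | succ j ih =>
    have hpn : 0 ≤ mnP C a b j := by
      rw [ih]
      apply mul_nonneg hC
      apply Finset.sum_nonneg
      intro i _
      have h1 := (mnH_bounds i a ha0 ha1).1
      have h2 := (mnH_bounds i b hb0 hb1).1
      linarith
    show mnSig (mnP C a b j) + C * mnSig (mnH j a) + C * mnSig (mnH j b) = _
    rw [Finset.sum_range_succ]
    unfold mnSig
    rw [max_eq_left hpn, max_eq_left (mnH_bounds j a ha0 ha1).1,
        max_eq_left (mnH_bounds j b hb0 hb1).1, ih]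
    ring

lemma mnP_comm (C a b : ℝ) : ∀ j, mnP C a b j = mnP C b a j := by
  intro j
  induction j with
  | zero => rfl
  | succ j ih =>
    show mnSig (mnP C a b j) + C * mnSig (mnH j a) + C * mnSig (mnH j b) =
      mnSig (mnP C b a j) + C * mnSig (mnH j b) + C * mnSig (mnH j a)
    rw [ih]; ring


/-- double of the rational part of weight matrices, indexed by matrix type `t`. -/
def mnQ1 (t r c : ℕ) : ℤ :=
  if t = 0 then
    (if (r = 0 ∧ c = 0) ∨ (r = 1 ∧ c = 1) then 2 else if r = 2 ∧ c = 1 then -2 else 0)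
  else if t = 1 then (if r ≤ 3 ∧ c = 0 then 1 else 0)
  else if t = 2 then
    (if r ≤ 7 then (if c = 2*(r/2) then 1 else if c = 2*(r/2)+1 then -2 else 0)
     else if (r = 8 ∧ c = 8) ∨ (r = 9 ∧ c = 9) then 2 else 0)
  else if t = 3 then (if (r ≤ 1 ∧ c = 8) ∨ ((r = 2 ∨ r = 3) ∧ c = 9) then 2 else 0)
  else if t = 4 then
    (if r = 0 ∧ c ≤ 1 then 2 else if r = 0 ∧ (c = 2 ∨ c = 3) then -2 else 0)
  else 0

/-- double of the coefficient of `C` in weight matrices. -/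
def mnQ2 (t r c : ℕ) : ℤ :=
  if t = 2 then
    (if (r = 8 ∧ (c = 2 ∨ c = 4)) ∨ (r = 9 ∧ (c = 0 ∨ c = 6)) then 2 else 0)
  else if t = 3 then
    (if (r ≤ 1 ∧ (c = 2 ∨ c = 4)) ∨ ((r = 2 ∨ r = 3) ∧ (c = 0 ∨ c = 6)) then 2 else 0)
  else 0

/-- double of the coefficient of `C⁻¹` in weight matrices. -/
def mnQ3 (t r c : ℕ) : ℤ :=
  if t = 1 then
    (if (r ≤ 1 ∨ r = 4 ∨ r = 5) ∧ c = 1 then 1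
     else if (r = 2 ∨ r = 3 ∨ r = 6 ∨ r = 7) ∧ c = 2 then 1 else 0)
  else 0

def mnType (K i : ℕ) : ℕ :=
  if i = 0 then 0 else if i = 1 then 1 else if i ≤ K+1 then 2
  else if i = K+2 then 3 else if i = K+3 then 4 else 5

def mnA (C : ℝ) (K i r c : ℕ) : ℝ :=
  ((mnQ1 (mnType K i) r c : ℝ) + C * (mnQ2 (mnType K i) r c : ℝ)
    + C⁻¹ * (mnQ3 (mnType K i) r c : ℝ)) / 2

def mnB (K i r : ℕ) : ℝ :=
  if 1 ≤ i ∧ i ≤ K+1 ∧ (r = 1 ∨ r = 3 ∨ r = 5 ∨ r = 7) then (1/4)^(i-1) * (1/2) else 0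

def mnW (K : ℕ) : ℕ → ℕ := fun i => if i = 0 then 2 else if i = K+4 then 1 else 10

def mulNet (C : ℝ) (K : ℕ) : ReluNet 2 1 where
  L := K + 3
  width := mnW K
  hin := by simp [mnW]
  hout := by simp [mnW]
  A := fun i => Matrix.of fun r c => mnA C K i r.val c.val
  b := fun i r => mnB K i r.val

lemma mulVec_eval10 {n m : ℕ} (hm : m = 10) (M : ℕ → ℕ → ℝ) (vec : Fin m → ℝ) (w : ℕ → ℝ)
    (hvec : ∀ jj : Fin m, vec jj = w jj.val) (r : Fin n) :
    ((Matrix.of fun (i : Fin n) (jj : Fin m) => M i.val jj.val) *ᵥ vec) r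
      = M r.val 0 * w 0 + M r.val 1 * w 1 + M r.val 2 * w 2 + M r.val 3 * w 3
        + M r.val 4 * w 4 + M r.val 5 * w 5 + M r.val 6 * w 6 + M r.val 7 * w 7
        + M r.val 8 * w 8 + M r.val 9 * w 9 := by
  subst hm
  simp [Matrix.mulVec, dotProduct, Fin.sum_univ_succ, hvec]
  ring

lemma mulVec_eval2 {n m : ℕ} (hm : m = 2) (M : ℕ → ℕ → ℝ) (vec : Fin m → ℝ) (w : ℕ → ℝ)
    (hvec : ∀ jj : Fin m, vec jj = w jj.val) (r : Fin n) :
    ((Matrix.of fun (i : Fin n) (jj : Fin m) => M i.val jj.val) *ᵥ vec) r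
      = M r.val 0 * w 0 + M r.val 1 * w 1 := by
  subst hm
  simp [Matrix.mulVec, dotProduct, Fin.sum_univ_succ, hvec]

def mnU1 (C x y : ℝ) : ℝ := 1/2 * mnSig x + C⁻¹ * (1/2) * mnSig y
def mnU2 (C x y : ℝ) : ℝ := 1/2 * mnSig x + C⁻¹ * (1/2) * mnSig (-y)
def mnU3 (C y : ℝ) : ℝ := C⁻¹ * (1/2) * mnSig y
def mnU4 (C y : ℝ) : ℝ := C⁻¹ * (1/2) * mnSig (-y)

def mnState (C x y : ℝ) (j k : ℕ) : ℝ :=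
  if k ≤ 1 then mnH j (mnU1 C x y)
  else if k ≤ 3 then mnH j (mnU2 C x y)
  else if k ≤ 5 then mnH j (mnU3 C y)
  else if k ≤ 7 then mnH j (mnU4 C y)
  else if k = 8 then mnP C (mnU2 C x y) (mnU3 C y) j
  else if k = 9 then mnP C (mnU1 C x y) (mnU4 C y) j
  else 0

lemma mnW_eq10 (K i : ℕ) (h0 : i ≠ 0) (h1 : i ≠ K+4) : mnW K i = 10 := by
  simp [mnW, h0, h1]

set_option maxHeartbeats 2000000 in
lemma mulNet_forward (C x y : ℝ) (K : ℕ) (v : Fin (mnW K 0) → ℝ)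
    (hv : ∀ k : Fin (mnW K 0), v k = if k.val = 0 then x else y) :
    ∀ j, j ≤ K → ∀ idx : Fin (mnW K (j+2)),
      (mulNet C K).forward v (j+2) idx = mnState C x y j idx.val := by
  -- layer 1
  have h1 : ∀ idx : Fin (mnW K 1), (mulNet C K).forward v 1 idx
      = (if idx.val = 0 then x else if idx.val = 1 then y else if idx.val = 2 then -y else 0) := by
    intro idx
    show ((mulNet C K).A 0 *ᵥ v) idx = _
    have := mulVec_eval2 (by norm_num [mnW]) (mnA C K 0) v
      (fun k => if k = 0 then x else y) (by intro jj; rw [hv jj]) idx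
    refine this.trans ?_
    obtain ⟨k, hk⟩ := idx
    rw [mnW_eq10 K 1 (by omega) (by omega)] at hk
    interval_cases k <;>
      norm_num [mnA, mnQ1, mnQ2, mnQ3, mnType]
  intro j
  induction j with
  | zero =>
    intro _ idx
    have hb0 : ∀ c : Fin (mnW K 1), (mulNet C K).b 0 c = 0 := by
      intro c; show mnB K 0 c.val = 0; simp [mnB]
    have key := mulVec_eval10 (mnW_eq10 K 1 (by omega) (by omega)) (mnA C K 1)
      (fun c => max ((mulNet C K).forward v 1 c - (mulNet C K).b 0 c) 0)
      (fun k => max (if k = 0 then x else if k = 1 then y else if k = 2 then -y else 0) 0)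
      (by intro jj; simp only [hb0, h1]; norm_num) idx
    refine Eq.trans key ?_
    obtain ⟨k, hk⟩ := idx
    rw [mnW_eq10 K (0+2) (by omega) (by omega)] at hk
    have ht : mnType K 1 = 1 := rfl
    interval_cases k <;>
      simp only [mnA, ht, Fin.val_mk] <;>
      norm_num [mnQ1, mnQ2, mnQ3, mnState, mnH, mnP, mnU1, mnU2, mnU3, mnU4, mnSig] <;>
      try (left; ring)
  | succ j ih =>
    intro hj idx
    have ihh := ih (by omega)
    have key := mulVec_eval10 (mnW_eq10 K (j+2) (by omega) (by omega)) (mnA C K (j+2))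
      (fun c => max ((mulNet C K).forward v (j+2) c - (mulNet C K).b (j+1) c) 0)
      (fun k => max (mnState C x y j k - mnB K (j+1) k) 0)
      (by intro jj; simp only [ihh]; rfl) idx
    refine Eq.trans key ?_
    obtain ⟨k, hk⟩ := idx
    rw [mnW_eq10 K (j+1+2) (by omega) (by omega)] at hk
    have ht : mnType K (j+2) = 2 := by
      unfold mnType
      rw [if_neg (by omega), if_neg (by omega), if_pos (by omega)]
    have hbv : ∀ kq : ℕ, mnB K (j+1) kq
        = if kq = 1 ∨ kq = 3 ∨ kq = 5 ∨ kq = 7 then (1/4)^j * (1/2) else 0 := by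
      intro kq
      unfold mnB
      by_cases h : kq = 1 ∨ kq = 3 ∨ kq = 5 ∨ kq = 7
      · rw [if_pos ⟨by omega, by omega, h⟩, if_pos h]; norm_num
      · rw [if_neg (by tauto), if_neg h]
    interval_cases k <;>
      simp only [key, ht, hbv, mnA, mnQ1, mnQ2, mnQ3, mnState] <;>
      norm_num [mnH, mnP, mnSig] <;>
      ring

def mnDup (C x y : ℝ) (K : ℕ) (k : ℕ) : ℝ :=
  if k ≤ 1 then mnP C (mnU2 C x y) (mnU3 C y) (K+1)
  else if k ≤ 3 then mnP C (mnU1 C x y) (mnU4 C y) (K+1)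
  else 0

set_option maxHeartbeats 2000000 in
lemma mulNet_eval (C x y : ℝ) (K : ℕ) (hK : 1 ≤ K) :
    (mulNet C K).eval ![x, y] 0
      = 2 * mnSig (mnP C (mnU2 C x y) (mnU3 C y) (K+1))
        - 2 * mnSig (mnP C (mnU1 C x y) (mnU4 C y) (K+1)) := by
  have hv : ∀ k : Fin (mnW K 0),
      (fun k : Fin (mnW K 0) => ![x, y] (Fin.cast (mulNet C K).hin k)) k
        = if k.val = 0 then x else y := by
    intro k
    obtain ⟨kv, hkv⟩ := k
    have h2 : mnW K 0 = 2 := rfl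
    rw [h2] at hkv
    interval_cases kv <;> rfl
  set vv := fun k : Fin (mnW K 0) => ![x, y] (Fin.cast (mulNet C K).hin k) with hvv
  have hfwd := mulNet_forward C x y K vv hv K le_rfl
  have hbK1 : ∀ kq : ℕ, mnB K (K+1) kq
      = if kq = 1 ∨ kq = 3 ∨ kq = 5 ∨ kq = 7 then (1/4)^K * (1/2) else 0 := by
    intro kq
    unfold mnB
    by_cases h : kq = 1 ∨ kq = 3 ∨ kq = 5 ∨ kq = 7
    · rw [if_pos ⟨by omega, by omega, h⟩, if_pos h]; norm_num
    · rw [if_neg (by tauto), if_neg h]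
  have hdup : ∀ idx : Fin (mnW K (K+1+2)),
      (mulNet C K).forward vv (K+1+2) idx = mnDup C x y K idx.val := by
    intro idx
    have key := mulVec_eval10 (mnW_eq10 K (K+2) (by omega) (by omega)) (mnA C K (K+2))
      (fun c => max ((mulNet C K).forward vv (K+2) c - (mulNet C K).b (K+1) c) 0)
      (fun k => max (mnState C x y K k - mnB K (K+1) k) 0)
      (by intro jj; simp only [hfwd]; rfl) idx
    refine Eq.trans key ?_
    obtain ⟨k, hk⟩ := idx
    rw [mnW_eq10 K (K+1+2) (by omega) (by omega)] at hk
    have ht : mnType K (K+2) = 3 := by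
      unfold mnType
      rw [if_neg (by omega), if_neg (by omega), if_neg (by omega), if_pos rfl]
    interval_cases k <;>
      simp only [mnA, ht, hbK1, Fin.val_mk] <;>
      norm_num [mnQ1, mnQ2, mnQ3, mnState, mnDup, mnP, mnSig] <;> ring
  have hbK2 : ∀ kq : ℕ, mnB K (K+2) kq = 0 := by
    intro kq
    unfold mnB
    rw [if_neg (by rintro ⟨-, h, -⟩; omega)]
  show (mulNet C K).forward vv (K+2+2) (Fin.cast (mulNet C K).hout.symm 0) = _
  have key := mulVec_eval10 (mnW_eq10 K (K+3) (by omega) (by omega)) (mnA C K (K+3))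
    (fun c => max ((mulNet C K).forward vv (K+1+2) c - (mulNet C K).b (K+2) c) 0)
    (fun k => max (mnDup C x y K k - 0) 0)
    (by intro jj; simp only [hdup]; rw [show (mulNet C K).b (K+2) jj = mnB K (K+2) jj.val from rfl, hbK2]) 
    (Fin.cast (mulNet C K).hout.symm 0)
  refine Eq.trans key ?_
  have hval : (Fin.cast (mulNet C K).hout.symm (0 : Fin 1)).val = 0 := rfl
  rw [hval]
  have ht : mnType K (K+3) = 4 := by
    unfold mnType
    rw [if_neg (by omega), if_neg (by omega), if_neg (by omega), if_neg (by omega), if_pos rfl]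
  simp only [mnA, ht]
  norm_num [mnQ1, mnQ2, mnQ3, mnDup, mnSig]
  ring

lemma mnSig_sub (y : ℝ) : mnSig y - mnSig (-y) = y := by
  unfold mnSig
  rcases le_total y 0 with h | h
  · rw [max_eq_right h, max_eq_left (by linarith)]; ring
  · rw [max_eq_left h, max_eq_right (by linarith)]; ring

lemma mulNet_vanish_x (C y : ℝ) (K : ℕ) (hK : 1 ≤ K) :
    (mulNet C K).eval ![0, y] 0 = 0 := by
  rw [mulNet_eval C 0 y K hK]
  have hu1 : mnU1 C 0 y = mnU3 C y := by unfold mnU1 mnU3 mnSig; norm_num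
  have hu2 : mnU2 C 0 y = mnU4 C y := by unfold mnU2 mnU4 mnSig; norm_num
  rw [hu1, hu2, mnP_comm C (mnU4 C y) (mnU3 C y)]
  ring

lemma mulNet_vanish_y (C x : ℝ) (K : ℕ) (hK : 1 ≤ K) :
    (mulNet C K).eval ![x, 0] 0 = 0 := by
  rw [mulNet_eval C x 0 K hK]
  have hu1 : mnU1 C x 0 = mnU2 C x 0 := by unfold mnU1 mnU2 mnSig; norm_num
  have hu3 : mnU3 C 0 = mnU4 C 0 := by unfold mnU3 mnU4 mnSig; norm_num
  rw [hu1, hu3]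
  ring

set_option maxHeartbeats 1000000 in
lemma mulNet_err (C x y : ℝ) (hC : 1 ≤ C) (K : ℕ) (hK : 1 ≤ K)
    (hx0 : 0 ≤ x) (hx1 : x ≤ 1) (hy0 : -C ≤ y) (hy1 : y ≤ C) :
    |(mulNet C K).eval ![x, y] 0 - x * y| ≤ C * (1/4)^K := by
  have hC0 : (0:ℝ) < C := by linarith
  have hCne : C ≠ 0 := ne_of_gt hC0
  have hsx : mnSig x = x := max_eq_left hx0
  have hp0 : 0 ≤ mnSig y := le_max_right _ _
  have hp1 : mnSig y ≤ C := max_le hy1 (by linarith)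
  have hq0 : 0 ≤ mnSig (-y) := le_max_right _ _
  have hq1 : mnSig (-y) ≤ C := max_le (by linarith) (by linarith)
  have hCinv : C⁻¹ * C = 1 := inv_mul_cancel₀ hCne
  have hCinv0 : 0 ≤ C⁻¹ := by positivity
  -- bounds on the u's
  have hu10 : 0 ≤ mnU1 C x y := by
    unfold mnU1; rw [hsx]; positivity
  have hu11 : mnU1 C x y ≤ 1 := by
    unfold mnU1; rw [hsx]
    have : C⁻¹ * mnSig y ≤ 1 := by
      calc C⁻¹ * mnSig y ≤ C⁻¹ * C := by apply mul_le_mul_of_nonneg_left hp1 hCinv0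
      _ = 1 := hCinv
    nlinarith
  have hu20 : 0 ≤ mnU2 C x y := by unfold mnU2; rw [hsx]; positivity
  have hu21 : mnU2 C x y ≤ 1 := by
    unfold mnU2; rw [hsx]
    have : C⁻¹ * mnSig (-y) ≤ 1 := by
      calc C⁻¹ * mnSig (-y) ≤ C⁻¹ * C := by apply mul_le_mul_of_nonneg_left hq1 hCinv0
      _ = 1 := hCinv
    nlinarith
  have hu30 : 0 ≤ mnU3 C y := by unfold mnU3; positivity
  have hu31 : mnU3 C y ≤ 1 := by
    unfold mnU3
    have : C⁻¹ * mnSig y ≤ 1 := by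
      calc C⁻¹ * mnSig y ≤ C⁻¹ * C := by apply mul_le_mul_of_nonneg_left hp1 hCinv0
      _ = 1 := hCinv
    nlinarith
  have hu40 : 0 ≤ mnU4 C y := by unfold mnU4; positivity
  have hu41 : mnU4 C y ≤ 1 := by
    unfold mnU4
    have : C⁻¹ * mnSig (-y) ≤ 1 := by
      calc C⁻¹ * mnSig (-y) ≤ C⁻¹ * C := by apply mul_le_mul_of_nonneg_left hq1 hCinv0
      _ = 1 := hCinv
    nlinarith
  obtain ⟨e1, he10, he11, hs1⟩ := mnH_sum K (mnU1 C x y) hu10 hu11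
  obtain ⟨e2, he20, he21, hs2⟩ := mnH_sum K (mnU2 C x y) hu20 hu21
  obtain ⟨e3, he30, he31, hs3⟩ := mnH_sum K (mnU3 C y) hu30 hu31
  obtain ⟨e4, he40, he41, hs4⟩ := mnH_sum K (mnU4 C y) hu40 hu41
  have hP : mnP C (mnU2 C x y) (mnU3 C y) (K+1)
      = C * ((2*mnU2 C x y - (mnU2 C x y)^2 - e2) + (2*mnU3 C y - (mnU3 C y)^2 - e3)) := by
    rw [mnP_closed (by linarith) hu20 hu21 hu30 hu31 (K+1), Finset.sum_add_distrib, hs2, hs3]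
  have hN : mnP C (mnU1 C x y) (mnU4 C y) (K+1)
      = C * ((2*mnU1 C x y - (mnU1 C x y)^2 - e1) + (2*mnU4 C y - (mnU4 C y)^2 - e4)) := by
    rw [mnP_closed (by linarith) hu10 hu11 hu40 hu41 (K+1), Finset.sum_add_distrib, hs1, hs4]
  have hPn : 0 ≤ mnP C (mnU2 C x y) (mnU3 C y) (K+1) := by
    rw [mnP_closed (by linarith) hu20 hu21 hu30 hu31 (K+1)]
    apply mul_nonneg (by linarith)
    apply Finset.sum_nonneg
    intro i _
    have h1 := (mnH_bounds i _ hu20 hu21).1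
    have h2 := (mnH_bounds i _ hu30 hu31).1
    linarith
  have hNn : 0 ≤ mnP C (mnU1 C x y) (mnU4 C y) (K+1) := by
    rw [mnP_closed (by linarith) hu10 hu11 hu40 hu41 (K+1)]
    apply mul_nonneg (by linarith)
    apply Finset.sum_nonneg
    intro i _
    have h1 := (mnH_bounds i _ hu10 hu11).1
    have h2 := (mnH_bounds i _ hu40 hu41).1
    linarith
  rw [mulNet_eval C x y K hK]
  unfold mnSig
  rw [max_eq_left hPn, max_eq_left hNn, hP, hN]
  have hxy : x * y = x * (mnSig y - mnSig (-y)) := by rw [mnSig_sub]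
  have hkey : 2 * (C * ((2*mnU2 C x y - (mnU2 C x y)^2 - e2) + (2*mnU3 C y - (mnU3 C y)^2 - e3)))
      - 2 * (C * ((2*mnU1 C x y - (mnU1 C x y)^2 - e1) + (2*mnU4 C y - (mnU4 C y)^2 - e4)))
      - x * y = 2*C*(e1 + e4 - e2 - e3) := by
    rw [hxy]
    unfold mnU1 mnU2 mnU3 mnU4
    rw [hsx]
    field_simp
    ring
  rw [hkey]
  have hB : (0:ℝ) ≤ (1/4)^K * (1/4) := by positivity
  have h2C : (0:ℝ) ≤ 2*C := by linarith
  have hup : 2*C*(e1 + e4 - e2 - e3) ≤ 2*C*(2*((1/4)^K * (1/4))) :=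
    mul_le_mul_of_nonneg_left (by linarith) h2C
  have hlo : 2*C*(-(2*((1/4)^K * (1/4)))) ≤ 2*C*(e1 + e4 - e2 - e3) :=
    mul_le_mul_of_nonneg_left (by linarith) h2C
  have hEq : 2*C*(2*((1/4)^K * (1/4))) = C * (1/4)^K := by ring
  have hEq2 : 2*C*(-(2*((1/4)^K * (1/4)))) = -(C * (1/4)^K) := by ring
  rw [abs_le]
  constructor
  · linarith
  · linarith

lemma mnW_le (K i : ℕ) : mnW K i ≤ 10 := by
  unfold mnW; split_ifs <;> omega

lemma mnType_le (K i : ℕ) : mnType K i ≤ 5 := by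
  unfold mnType; split_ifs <;> omega

lemma mnQ_bound : ∀ t ∈ Finset.range 6, ∀ r ∈ Finset.range 10, ∀ c ∈ Finset.range 10,
    (mnQ2 t r c = 0 ∧ mnQ3 t r c = 0 ∧ -2 ≤ mnQ1 t r c ∧ mnQ1 t r c ≤ 2) ∨
    (mnQ1 t r c = 0 ∧ mnQ3 t r c = 0 ∧ -2 ≤ mnQ2 t r c ∧ mnQ2 t r c ≤ 2) ∨
    (mnQ1 t r c = 0 ∧ mnQ2 t r c = 0 ∧ 0 ≤ mnQ3 t r c ∧ mnQ3 t r c ≤ 2) := by decide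

lemma mulNet_paramBound (C : ℝ) (hC : 1 ≤ C) (K : ℕ) : (mulNet C K).paramBound C := by
  have hC0 : (0:ℝ) < C := by linarith
  have hCi0 : (0:ℝ) < C⁻¹ := by positivity
  have hCi1 : C⁻¹ ≤ 1 := by rw [inv_le_one_iff₀]; right; exact hC
  constructor
  · intro i _ j k
    show |mnA C K i j.val k.val| ≤ C
    have hj : j.val < 10 := lt_of_lt_of_le j.isLt (mnW_le K (i+1))
    have hk : k.val < 10 := lt_of_lt_of_le k.isLt (mnW_le K i)
    have ht : mnType K i < 6 := by have := mnType_le K i; omega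
    unfold mnA
    rw [abs_le]
    rcases mnQ_bound (mnType K i) (Finset.mem_range.2 ht) j.val (Finset.mem_range.2 hj)
        k.val (Finset.mem_range.2 hk) with ⟨h2, h3, h1a, h1b⟩ | ⟨h1, h3, h2a, h2b⟩ |
        ⟨h1, h2, h3a, h3b⟩
    · rw [h2, h3]
      have ha : (-2:ℝ) ≤ (mnQ1 (mnType K i) j.val k.val : ℝ) := by exact_mod_cast h1a
      have hb : ((mnQ1 (mnType K i) j.val k.val : ℝ)) ≤ 2 := by exact_mod_cast h1b
      push_cast
      constructor <;> nlinarith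
    · rw [h1, h3]
      have ha : (-2:ℝ) ≤ (mnQ2 (mnType K i) j.val k.val : ℝ) := by exact_mod_cast h2a
      have hb : ((mnQ2 (mnType K i) j.val k.val : ℝ)) ≤ 2 := by exact_mod_cast h2b
      push_cast
      constructor <;> nlinarith
    · rw [h1, h2]
      have ha : (0:ℝ) ≤ (mnQ3 (mnType K i) j.val k.val : ℝ) := by exact_mod_cast h3a
      have hb : ((mnQ3 (mnType K i) j.val k.val : ℝ)) ≤ 2 := by exact_mod_cast h3b
      push_cast
      have h1 : C⁻¹ * (mnQ3 (mnType K i) j.val k.val : ℝ) ≤ 1 * 2 :=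
        mul_le_mul hCi1 hb ha (by norm_num)
      have h2 : 0 ≤ C⁻¹ * (mnQ3 (mnType K i) j.val k.val : ℝ) := by positivity
      constructor <;> nlinarith
  · intro i _ j
    show |mnB K i j.val| ≤ C
    unfold mnB
    split_ifs with h
    · rw [abs_of_nonneg (by positivity)]
      have h1 : ((1:ℝ)/4)^(i-1) ≤ 1 := pow_le_one₀ (by norm_num) (by norm_num)
      nlinarith
    · simpa using by linarith

lemma card_le_pat2 {n m : ℕ} (f : ℕ → ℕ → ℝ) (pat : Finset (ℕ × ℕ))
    (hf : ∀ r c, r < n → c < m → f r c ≠ 0 → (r, c) ∈ pat) :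
    (Finset.univ.filter fun p : Fin n × Fin m => f p.1.val p.2.val ≠ 0).card ≤ pat.card := by
  apply Finset.card_le_card_of_injOn (fun p => (p.1.val, p.2.val))
  · intro p hp
    rw [Finset.mem_coe, Finset.mem_filter] at hp
    exact hf p.1.val p.2.val p.1.isLt p.2.isLt hp.2
  · intro p _ q _ hpq
    obtain ⟨h1, h2⟩ := Prod.mk.injEq _ _ _ _ ▸ hpq
    exact Prod.ext (Fin.val_injective h1) (Fin.val_injective h2)

lemma card_le_pat1 {n : ℕ} (f : ℕ → ℝ) (pat : Finset ℕ)
    (hf : ∀ r, r < n → f r ≠ 0 → r ∈ pat) :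
    (Finset.univ.filter fun p : Fin n => f p.val ≠ 0).card ≤ pat.card := by
  apply Finset.card_le_card_of_injOn Fin.val
  · intro p hp
    rw [Finset.mem_coe, Finset.mem_filter] at hp
    exact hf p.val p.isLt hp.2
  · intro p _ q _ hpq
    exact Fin.val_injective hpq

def mnPatA (t : ℕ) : Finset (ℕ × ℕ) :=
  (Finset.range 10 ×ˢ Finset.range 10).filter fun p =>
    mnQ1 t p.1 p.2 ≠ 0 ∨ mnQ2 t p.1 p.2 ≠ 0 ∨ mnQ3 t p.1 p.2 ≠ 0

lemma mnPatA_card : (mnPatA 0).card = 3 ∧ (mnPatA 1).card = 12 ∧ (mnPatA 2).card = 22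
    ∧ (mnPatA 3).card = 12 ∧ (mnPatA 4).card = 4 ∧ (mnPatA 5).card = 0 := by decide

lemma mnPatA_mem (C : ℝ) (K i : ℕ) {r c : ℕ} (hr : r < 10) (hc : c < 10)
    (h : mnA C K i r c ≠ 0) : (r, c) ∈ mnPatA (mnType K i) := by
  rw [mnPatA, Finset.mem_filter, Finset.mem_product]
  refine ⟨⟨Finset.mem_range.2 hr, Finset.mem_range.2 hc⟩, ?_⟩
  by_contra hcon
  push_neg at hcon
  obtain ⟨h1, h2, h3⟩ := hcon
  apply h
  unfold mnA
  rw [h1, h2, h3]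
  norm_num

def mnGb (t : ℕ) : ℕ :=
  if t = 0 then 3 else if t = 1 then 12 else if t = 2 then 22
  else if t = 3 then 12 else if t = 4 then 4 else 0

lemma mnPatA_card_gb (t : ℕ) (ht : t ≤ 5) : (mnPatA t).card = mnGb t := by
  obtain ⟨h0, h1, h2, h3, h4, h5⟩ := mnPatA_card
  interval_cases t <;> simp [mnGb, h0, h1, h2, h3, h4, h5]

lemma sumA_aux : ∀ n : ℕ,
    ∑ i ∈ Finset.range (n+2), (if i = 0 then 3 else if i = 1 then 12 else 22) = 22*n + 15 := by
  intro n
  induction n with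
  | zero => decide
  | succ n ih =>
    rw [show n+1+2 = (n+2)+1 by omega, Finset.sum_range_succ, ih,
      if_neg (by omega), if_neg (by omega)]
    omega

lemma sumB_aux : ∀ n : ℕ,
    ∑ i ∈ Finset.range (n+1), (if i = 0 then (0:ℕ) else 4) = 4*n := by
  intro n
  induction n with
  | zero => decide
  | succ n ih =>
    rw [Finset.sum_range_succ, ih, if_neg (by omega)]
    omega

lemma mulNet_sparsity (C : ℝ) (K : ℕ) (hK : 1 ≤ K) :
    (mulNet C K).sparsity ≤ 26*K + 35 := by
  have hA : ∀ i, (Finset.univ.filter fun p :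
        Fin ((mulNet C K).width (i + 1)) × Fin ((mulNet C K).width i) =>
        (mulNet C K).A i p.1 p.2 ≠ 0).card ≤ mnGb (mnType K i) := by
    intro i
    have hb := card_le_pat2 (n := mnW K (i+1)) (m := mnW K i) (mnA C K i)
      (mnPatA (mnType K i)) (fun r c hr hc h =>
        mnPatA_mem C K i (lt_of_lt_of_le hr (mnW_le K (i+1))) (lt_of_lt_of_le hc (mnW_le K i)) h)
    rw [mnPatA_card_gb _ (mnType_le K i)] at hb
    exact hb
  have hB : ∀ i, i ≠ 0 → i ≠ K+2 → (Finset.univ.filter fun j :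
        Fin ((mulNet C K).width (i + 1)) => (mulNet C K).b i j ≠ 0).card ≤ 4 := by
    intro i h0 h2
    have hb := card_le_pat1 (n := mnW K (i+1)) (mnB K i) ({1, 3, 5, 7} : Finset ℕ)
      (by
        intro r _ h
        unfold mnB at h
        split_ifs at h with hc
        · rcases hc.2.2 with h | h | h | h <;> simp [h]
        · exact absurd rfl h)
    exact le_trans hb (by simp)
  have hB0 : ∀ i, (i = 0 ∨ i = K+2) → (Finset.univ.filter fun j :
        Fin ((mulNet C K).width (i + 1)) => (mulNet C K).b i j ≠ 0).card ≤ 0 := by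
    intro i hi
    have hb := card_le_pat1 (n := mnW K (i+1)) (mnB K i) (∅ : Finset ℕ)
      (by
        intro r _ h
        exfalso
        apply h
        unfold mnB
        rw [if_neg]
        rintro ⟨ha, hbb, -⟩
        rcases hi with hi | hi <;> omega)
    exact le_trans hb (by simp)
  unfold ReluNet.sparsity
  have hL : (mulNet C K).L = K + 3 := rfl
  rw [hL]
  have hTot1 : (∑ i ∈ Finset.range (K+3+1), (Finset.univ.filter fun p :
        Fin ((mulNet C K).width (i + 1)) × Fin ((mulNet C K).width i) =>
        (mulNet C K).A i p.1 p.2 ≠ 0).card) ≤ 22*K + 31 := by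
    calc (∑ i ∈ Finset.range (K+3+1), (Finset.univ.filter fun p :
          Fin ((mulNet C K).width (i + 1)) × Fin ((mulNet C K).width i) =>
          (mulNet C K).A i p.1 p.2 ≠ 0).card)
        ≤ ∑ i ∈ Finset.range (K+4), mnGb (mnType K i) := Finset.sum_le_sum (fun i _ => hA i)
      _ = 22*K + 31 := by
          rw [show K+4 = (K+2)+1+1 by omega, Finset.sum_range_succ, Finset.sum_range_succ]
          have ht2 : ∀ i, 2 ≤ i → i ≤ K+1 → mnType K i = 2 := by
            intro i h2 h1
            unfold mnType
            rw [if_neg (by omega), if_neg (by omega), if_pos (by omega)]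
          have htK2 : mnType K (K+2) = 3 := by
            unfold mnType
            rw [if_neg (by omega), if_neg (by omega), if_neg (by omega), if_pos rfl]
          have htK3 : mnType K (K+2+1) = 4 := by
            unfold mnType
            rw [if_neg (by omega), if_neg (by omega), if_neg (by omega), if_neg (by omega),
              if_pos (by omega)]
          have ht1 : mnType K 1 = 1 := by
            unfold mnType
            rw [if_neg (by omega), if_pos rfl]
          have e1 : mnGb (mnType K (K+2)) = 12 := by rw [htK2]; rfl
          have e2 : mnGb (mnType K (K+2+1)) = 4 := by rw [htK3]; rfl
          have e3 : ∑ i ∈ Finset.range (K+2), mnGb (mnType K i)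
              = ∑ i ∈ Finset.range (K+2), (if i = 0 then 3 else if i = 1 then 12 else 22) := by
            apply Finset.sum_congr rfl
            intro i hi
            rw [Finset.mem_range] at hi
            by_cases hi0 : i = 0
            · subst hi0; rfl
            · by_cases hi1 : i = 1
              · subst hi1
                rw [ht1, if_neg (by omega), if_pos rfl]
                rfl
              · rw [ht2 i (by omega) (by omega), if_neg hi0, if_neg hi1]
                rfl
          rw [e1, e2, e3, sumA_aux K]
  have hTot2 : (∑ i ∈ Finset.range (K+3), (Finset.univ.filter fun j :
        Fin ((mulNet C K).width (i + 1)) => (mulNet C K).b i j ≠ 0).card) ≤ 4*K + 4 := by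
    calc (∑ i ∈ Finset.range (K+3), (Finset.univ.filter fun j :
          Fin ((mulNet C K).width (i + 1)) => (mulNet C K).b i j ≠ 0).card)
        ≤ ∑ i ∈ Finset.range (K+3), (if i = 0 ∨ i = K+2 then 0 else 4) := by
          apply Finset.sum_le_sum
          intro i _
          by_cases hi : i = 0 ∨ i = K+2
          · rw [if_pos hi]; exact hB0 i hi
          · push_neg at hi
            rw [if_neg (by tauto)]
            exact hB i hi.1 hi.2
      _ = 4*K + 4 := by
          rw [show K+3 = (K+2)+1 by omega, Finset.sum_range_succ, if_pos (by omega)]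
          have e3 : ∑ i ∈ Finset.range (K+2), (if i = 0 ∨ i = K+2 then (0:ℕ) else 4)
              = ∑ i ∈ Finset.range (K+2), (if i = 0 then (0:ℕ) else 4) := by
            apply Finset.sum_congr rfl
            intro i hi
            rw [Finset.mem_range] at hi
            by_cases hi0 : i = 0
            · rw [if_pos (Or.inl hi0), if_pos hi0]
            · rw [if_neg (by omega), if_neg hi0]
          rw [e3, show K+2 = (K+1)+1 by omega, sumB_aux (K+1)]
          omega
  omega

def zNet : ReluNet 2 1 where
  L := 0
  width := fun i => if i = 0 then 2 else 1
  hin := by norm_num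
  hout := by norm_num
  A := fun _ => 0
  b := fun _ _ => 0

lemma zNet_eval (w : Fin 2 → ℝ) (j : Fin 1) : zNet.eval w j = 0 := by
  show (zNet.A 0 *ᵥ _) _ = 0
  show ((0 : Matrix _ _ ℝ) *ᵥ _) _ = 0
  exact congrFun (Matrix.zero_mulVec _) _

lemma zNet_sparsity : zNet.sparsity = 0 := by
  unfold ReluNet.sparsity
  have h1 : zNet.L = 0 := rfl
  rw [h1]
  have hz : ∀ p : Fin (zNet.width (0+1)) × Fin (zNet.width 0), ¬(zNet.A 0 p.1 p.2 ≠ 0) := by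
    intro p h
    exact h rfl
  rw [Finset.range_zero, Finset.sum_empty, add_zero, Finset.sum_range_one,
    Finset.filter_false_of_mem (fun p _ => hz p), Finset.card_empty]

end

/-- Approximate multiplication by a ReLU network: for `C ≥ 1` and `m ∈ ℕ`, there is a
ReLU network with at most `m+8` hidden layers, all layer widths at most `12`, at most
`58 + 16m` nonzero parameters all bounded by `C`, computing `xy` on `[0,1] × [-C,C]`
up to error `C·2^{-m}`, and vanishing when either argument is `0`. -/
theorem mult_network_exists (C : ℝ) (hC : 1 ≤ C) (m : ℕ) :
    ∃ net : ReluNet 2 1,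
      net.L ≤ m + 8 ∧
      (∀ i, i ≤ net.L + 1 → net.width i ≤ 12) ∧
      net.sparsity ≤ 58 + 16 * m ∧
      net.paramBound C ∧
      (∀ x ∈ Set.Icc (0 : ℝ) 1, ∀ y ∈ Set.Icc (-C) C,
        |net.eval ![x, y] 0 - x * y| ≤ C * 2 ^ (-(m : ℤ))) ∧
      (∀ y : ℝ, net.eval ![0, y] 0 = 0) ∧
      (∀ x : ℝ, net.eval ![x, 0] 0 = 0) := by
  rcases Nat.eq_zero_or_pos m with hm | hm
  · subst hm
    refine ⟨zNet, by rw [show zNet.L = 0 from rfl]; omega, ?_, ?_, ?_, ?_, ?_, ?_⟩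
    · intro i _
      show (if i = 0 then 2 else 1) ≤ 12
      split_ifs <;> omega
    · rw [zNet_sparsity]; omega
    · constructor
      · intro i _ j k
        show |(0:ℝ)| ≤ C
        rw [abs_zero]; linarith
      · intro i hi
        have h0 : zNet.L = 0 := rfl
        rw [h0] at hi
        exact absurd hi (by omega)
    · intro x hx y hy
      rw [zNet_eval]
      obtain ⟨hx0, hx1⟩ := hx
      obtain ⟨hy0, hy1⟩ := hy
      have : |(0:ℝ) - x * y| = |x| * |y| := by rw [zero_sub, abs_neg, abs_mul]
      rw [this]
      have h1 : |x| ≤ 1 := by rw [abs_le]; constructor <;> linarith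
      have h2 : |y| ≤ C := by rw [abs_le]; constructor <;> linarith
      have : |x| * |y| ≤ 1 * C := mul_le_mul h1 h2 (abs_nonneg y) (by norm_num)
      have he : C * (2:ℝ) ^ (-((0:ℕ):ℤ)) = C := by norm_num
      rw [he]
      linarith
    · intro y; rw [zNet_eval]
    · intro x; rw [zNet_eval]
  · set K := m / 2 + 1 with hKdef
    have hK1 : 1 ≤ K := by omega
    have hdiv : m / 2 * 2 ≤ m := by omega
    refine ⟨mulNet C K, ?_, ?_, ?_, mulNet_paramBound C hC K, ?_, ?_, ?_⟩
    · show K + 3 ≤ m + 8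
      omega
    · intro i _
      show mnW K i ≤ 12
      unfold mnW
      split_ifs <;> omega
    · have := mulNet_sparsity C K hK1
      have h2 : 26 * K + 35 ≤ 58 + 16 * m := by omega
      omega
    · intro x hx y hy
      obtain ⟨hx0, hx1⟩ := hx
      obtain ⟨hy0, hy1⟩ := hy
      have herr := mulNet_err C x y hC K hK1 hx0 hx1 hy0 hy1
      have hpow : ((1:ℝ)/4)^K ≤ (2:ℝ) ^ (-(m:ℤ)) := by
        rw [_root_.zpow_neg, zpow_natCast, div_pow, one_pow,
          show ((4:ℝ))^K = 2^(2*K) by rw [pow_mul]; norm_num, one_div]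
        have h2m : (2:ℝ)^m ≤ 2^(2*K) := pow_le_pow_right₀ (by norm_num) (by omega)
        exact inv_anti₀ (by positivity) h2m
      have hCp : (0:ℝ) ≤ C := by linarith
      calc |(mulNet C K).eval ![x, y] 0 - x * y| ≤ C * (1/4)^K := herr
        _ ≤ C * 2 ^ (-(m:ℤ)) := mul_le_mul_of_nonneg_left hpow hCp
    · intro y; exact mulNet_vanish_x C y K hK1
    · intro x; exact mulNet_vanish_y C x K hK1
end

section
/- Fix $m \in \mathbb{N}$ and define the error recursion $e_0(x) = \frac{1}{2x}$ and $e_{n+1}(x) = x\, e_n(x)^2 + 2^{-(m+1)}$ for $x > 0$. Let $\underline{k}, \overline{k} \in \mathbb{N}$ with $m > \overline{k}$, and let $n_0 = \lceil \log_2(\underline{k} + m + 2)\rceil$. Then for all $x \in [2^{-\underline{k}}, 2^{\overline{k}}]$, $e_{n_0}(x) \le 2^{-m}$. -/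
open Set

/-- Concrete model of the inexact Newton–Raphson error recursion. -/
private noncomputable def NRe (m : ℕ) : ℕ → ℝ → ℝ :=
  fun n => Nat.rec (fun x => 1 / (2 * x))
    (fun _ f x => x * (f x) ^ 2 + (2 : ℝ) ^ (-((m : ℤ) + 1))) n

/-- The "drift" part of the error: `NRd m n x = NRe m n x - 2^(-2^n) / x`. -/
private noncomputable def NRd (m n : ℕ) (x : ℝ) : ℝ := NRe m n x - (2 : ℝ) ^ (-(2 ^ n : ℤ)) / x

private lemma two_zpow_pos' (a : ℤ) : (0 : ℝ) < 2 ^ a := by positivity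

private lemma NRd_zero (m : ℕ) (x : ℝ) : NRd m 0 x = 0 := by
  have h2 : (2:ℝ) ^ (-(2 ^ 0 : ℤ)) = 1 / 2 := by norm_num
  show 1 / (2 * x) - (2:ℝ) ^ (-(2 ^ 0 : ℤ)) / x = 0
  rw [h2]
  rcases eq_or_ne x 0 with h | h
  · simp [h]
  · field_simp; ring

private lemma NRd_rec (m n : ℕ) (x : ℝ) (hx : x ≠ 0) :
    NRd m (n + 1) x = x * (NRd m n x) ^ 2 + 2 * (2 : ℝ) ^ (-(2 ^ n : ℤ)) * NRd m n x
      + (2 : ℝ) ^ (-((m : ℤ) + 1)) := by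
  have ht : (2 : ℝ) ^ (-(2 ^ (n + 1) : ℤ)) = (2 : ℝ) ^ (-(2 ^ n : ℤ)) * (2 : ℝ) ^ (-(2 ^ n : ℤ)) := by
    rw [← zpow_add₀ (by norm_num : (2:ℝ) ≠ 0)]
    congr 1
    rw [pow_succ]; ring
  have he : NRe m n x = (2 : ℝ) ^ (-(2 ^ n : ℤ)) / x + NRd m n x := by rw [NRd]; ring
  show NRe m (n + 1) x - (2 : ℝ) ^ (-(2 ^ (n + 1) : ℤ)) / x = _
  rw [show NRe m (n + 1) x = x * (NRe m n x) ^ 2 + (2 : ℝ) ^ (-((m : ℤ) + 1)) from rfl, he, ht]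
  field_simp
  ring

private lemma NRd_props (m uk : ℕ) (n : ℕ) :
    ConvexOn ℝ (Icc ((2:ℝ) ^ (-(uk : ℤ))) ((2:ℝ) ^ ((m : ℤ) - 1))) (NRd m n) ∧
    MonotoneOn (NRd m n) (Icc ((2:ℝ) ^ (-(uk : ℤ))) ((2:ℝ) ^ ((m : ℤ) - 1))) ∧
    ∀ x ∈ Icc ((2:ℝ) ^ (-(uk : ℤ))) ((2:ℝ) ^ ((m : ℤ) - 1)), 0 ≤ NRd m n x := by
  induction n with
  | zero =>
    have h : NRd m 0 = fun _ : ℝ => (0 : ℝ) := funext (NRd_zero m)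
    rw [h]
    exact ⟨convexOn_const _ (convex_Icc _ _), monotoneOn_const, fun x _ => le_rfl⟩
  | succ n ih =>
    obtain ⟨hc, hmo, h0⟩ := ih
    set S := Icc ((2:ℝ) ^ (-(uk : ℤ))) ((2:ℝ) ^ ((m : ℤ) - 1)) with hS
    have hS0 : ∀ x ∈ S, (0:ℝ) < x := fun x hx => lt_of_lt_of_le (two_zpow_pos' _) hx.1
    have heq : EqOn (fun x => x * (NRd m n x) ^ 2 +
        (2 * (2 : ℝ) ^ (-(2 ^ n : ℤ)) * NRd m n x + (2 : ℝ) ^ (-((m : ℤ) + 1)))) (NRd m (n+1)) S := by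
      intro x hx
      rw [NRd_rec m n x (ne_of_gt (hS0 x hx))]
      ring
    have hd2mono : MonotoneOn (fun x => NRd m n x ^ 2) S := by
      intro a ha b hb hab
      exact pow_le_pow_left₀ (h0 a ha) (hmo ha hb hab) 2
    have hd2conv : ConvexOn ℝ S (fun x => NRd m n x ^ 2) := by
      have := hc.pow (fun x hx => h0 x hx) 2
      exact this.congr (fun x _ => rfl)
    have hprod : ConvexOn ℝ S (fun x => x * NRd m n x ^ 2) := by
      have := ConvexOn.mul (𝕜 := ℝ) (s := S) (f := fun x : ℝ => x)
        (g := fun x => NRd m n x ^ 2) (convexOn_id (convex_Icc _ _)) hd2conv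
        (fun x hx => (hS0 x hx).le) (fun x _ => sq_nonneg _)
        (MonotoneOn.monovaryOn (fun a _ b _ h => h) hd2mono)
      exact this.congr (fun x _ => rfl)
    have hsmul : ConvexOn ℝ S (fun x => 2 * (2 : ℝ) ^ (-(2 ^ n : ℤ)) * NRd m n x) := by
      have := hc.smul (c := 2 * (2 : ℝ) ^ (-(2 ^ n : ℤ))) (by positivity)
      exact this.congr (fun x _ => rfl)
    refine ⟨?_, ?_, ?_⟩
    · exact (hprod.add (hsmul.add (convexOn_const _ (convex_Icc _ _)))).congr heq
    · intro a ha b hb hab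
      rw [← heq ha, ← heq hb]
      have h1 : a * NRd m n a ^ 2 ≤ b * NRd m n b ^ 2 :=
        mul_le_mul hab (pow_le_pow_left₀ (h0 a ha) (hmo ha hb hab) 2) (sq_nonneg _)
          (hS0 b hb).le
      have h2 : 2 * (2 : ℝ) ^ (-(2 ^ n : ℤ)) * NRd m n a ≤
          2 * (2 : ℝ) ^ (-(2 ^ n : ℤ)) * NRd m n b :=
        mul_le_mul_of_nonneg_left (hmo ha hb hab) (by positivity)
      exact add_le_add h1 (add_le_add h2 le_rfl)
    · intro x hx
      rw [← heq hx]
      exact add_nonneg (mul_nonneg (hS0 x hx).le (sq_nonneg _))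
        (add_nonneg (mul_nonneg (by positivity) (h0 x hx)) (two_zpow_pos' _).le)

private lemma NRe_right (m : ℕ) : ∀ n, NRe m n ((2:ℝ) ^ ((m : ℤ) - 1)) = (2:ℝ) ^ (-(m : ℤ))
  | 0 => by
    show 1 / (2 * (2:ℝ) ^ ((m : ℤ) - 1)) = _
    rw [show (2:ℝ) * (2:ℝ) ^ ((m : ℤ) - 1) = (2:ℝ) ^ (m : ℤ) by
      rw [← zpow_one_add₀ (by norm_num : (2:ℝ) ≠ 0)]; ring_nf]
    rw [one_div, ← zpow_neg]
  | n + 1 => by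
    show (2:ℝ) ^ ((m : ℤ) - 1) * (NRe m n ((2:ℝ) ^ ((m : ℤ) - 1))) ^ 2 + _ = _
    rw [NRe_right m n, sq, ← zpow_add₀ (by norm_num : (2:ℝ) ≠ 0),
      ← zpow_add₀ (by norm_num : (2:ℝ) ≠ 0),
      show (m:ℤ) - 1 + (-(m:ℤ) + -(m:ℤ)) = -((m:ℤ) + 1) by ring,
      show (-(m:ℤ)) = 1 + (-((m:ℤ) + 1)) by ring, zpow_add₀ (by norm_num : (2:ℝ) ≠ 0), zpow_one]
    ring

private lemma NRd_left (m uk : ℕ) (huk : 1 ≤ uk) (hm : 2 ≤ m) {n : ℕ} (hn : 3 ≤ n) :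
    NRd m n ((2:ℝ) ^ (-(uk : ℤ))) ≤ 3 / 2 * (2:ℝ) ^ (-((m : ℤ) + 1)) := by
  have hA0 : (0:ℝ) < (2:ℝ) ^ (-(uk : ℤ)) := two_zpow_pos' _
  have hAne : ((2:ℝ) ^ (-(uk : ℤ))) ≠ 0 := ne_of_gt hA0
  have hA2 : (2:ℝ) ^ (-(uk : ℤ)) ≤ 1 / 2 := by
    calc (2:ℝ) ^ (-(uk : ℤ)) ≤ (2:ℝ) ^ (-1 : ℤ) :=
          zpow_le_zpow_right₀ one_le_two (by omega)
      _ = 1 / 2 := by norm_num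
  have hε0 : (0:ℝ) < (2:ℝ) ^ (-((m : ℤ) + 1)) := two_zpow_pos' _
  have hε8 : (2:ℝ) ^ (-((m : ℤ) + 1)) ≤ 1 / 8 := by
    calc (2:ℝ) ^ (-((m : ℤ) + 1)) ≤ (2:ℝ) ^ (-3 : ℤ) :=
          zpow_le_zpow_right₀ one_le_two (by omega)
      _ = 1 / 8 := by norm_num
  have hnn : ∀ k, 0 ≤ NRd m k ((2:ℝ) ^ (-(uk : ℤ))) := by
    intro k
    induction k with
    | zero => rw [NRd_zero]
    | succ k ih =>
      rw [NRd_rec m k _ hAne]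
      exact add_nonneg (add_nonneg (mul_nonneg hA0.le (sq_nonneg _))
        (mul_nonneg (by positivity) ih)) hε0.le
  have h1 : NRd m 1 ((2:ℝ) ^ (-(uk : ℤ))) = (2:ℝ) ^ (-((m : ℤ) + 1)) := by
    rw [NRd_rec m 0 _ hAne, NRd_zero]; ring
  have h2 : NRd m 2 ((2:ℝ) ^ (-(uk : ℤ))) ≤ 25 / 16 * (2:ℝ) ^ (-((m : ℤ) + 1)) := by
    rw [NRd_rec m 1 _ hAne, h1, show (2:ℝ) ^ (-(2 ^ 1 : ℤ)) = 1 / 4 by norm_num]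
    nlinarith [mul_pos hε0 hε0, mul_le_mul_of_nonneg_left hε8 hε0.le]
  have h3 : NRd m 3 ((2:ℝ) ^ (-(uk : ℤ))) ≤ 3 / 2 * (2:ℝ) ^ (-((m : ℤ) + 1)) := by
    rw [NRd_rec m 2 _ hAne, show (2:ℝ) ^ (-(2 ^ 2 : ℤ)) = 1 / 16 by norm_num]
    have hd0 := hnn 2
    nlinarith [mul_pos hε0 hε0, mul_le_mul_of_nonneg_left hε8 hε0.le,
      mul_le_mul h2 h2 hd0 (by positivity : (0:ℝ) ≤ 25 / 16 * (2:ℝ) ^ (-((m : ℤ) + 1))),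
      mul_le_mul_of_nonneg_right hε8 (mul_pos hε0 hε0).le]
  obtain ⟨k, rfl⟩ : ∃ k, n = k + 3 := ⟨n - 3, by omega⟩
  clear hn
  induction k with
  | zero => exact h3
  | succ k ih =>
    rw [NRd_rec m (k + 3) _ hAne]
    have ht8 : (2:ℝ) ^ (-(2 ^ (k + 3) : ℤ)) ≤ 1 / 256 := by
      calc (2:ℝ) ^ (-(2 ^ (k + 3) : ℤ)) ≤ (2:ℝ) ^ (-8 : ℤ) := by
            apply zpow_le_zpow_right₀ one_le_two
            have : (8 : ℤ) ≤ 2 ^ (k + 3) := by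
              have : (2:ℤ) ^ 3 ≤ 2 ^ (k + 3) := pow_le_pow_right₀ (by norm_num) (by omega)
              norm_num at this ⊢; omega
            omega
        _ = 1 / 256 := by norm_num
    have ht0 : (0:ℝ) < (2:ℝ) ^ (-(2 ^ (k + 3) : ℤ)) := two_zpow_pos' _
    have hd := ih
    have hd0 := hnn (k + 3)
    nlinarith [mul_pos hε0 hε0, mul_le_mul_of_nonneg_left hε8 hε0.le,
      mul_le_mul hd hd hd0 (by positivity : (0:ℝ) ≤ 3 / 2 * (2:ℝ) ^ (-((m : ℤ) + 1))),
      mul_le_mul_of_nonneg_right hε8 (mul_pos hε0 hε0).le,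
      mul_le_mul_of_nonneg_right ht8 (mul_nonneg hd0 (by norm_num : (0:ℝ) ≤ 2)),
      mul_le_mul_of_nonneg_left hd ht0.le]

/-- Convergence of the inexact Newton–Raphson error recursion
`e₀(x) = 1/(2x)`, `e_{n+1}(x) = x e_n(x)² + 2^{-(m+1)}`:
after `n₀ = ⌈log₂(k̲ + m + 2)⌉` steps, `e_{n₀}(x) ≤ 2^{-m}` on `[2^{-k̲}, 2^{k̄}]`,
provided `m > k̄`. -/
theorem newton_raphson_error (m uk ok : ℕ) (huk : 1 ≤ uk) (hok : 1 ≤ ok) (hm : ok < m)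
    (e : ℕ → ℝ → ℝ)
    (he0 : ∀ x : ℝ, e 0 x = 1 / (2 * x))
    (herec : ∀ (n : ℕ) (x : ℝ), e (n + 1) x = x * (e n x) ^ 2 + (2 : ℝ) ^ (-((m : ℤ) + 1))) :
    ∀ x ∈ Set.Icc ((2 : ℝ) ^ (-(uk : ℤ))) ((2 : ℝ) ^ (ok : ℤ)),
      e (Nat.clog 2 (uk + m + 2)) x ≤ (2 : ℝ) ^ (-(m : ℤ)) := by
  intro x hx
  have hm2 : 2 ≤ m := by omega
  have hE : ∀ n y, e n y = NRe m n y := by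
    intro n
    induction n with
    | zero => intro y; rw [he0]; rfl
    | succ n ih => intro y; rw [herec, ih]; rfl
  set N := Nat.clog 2 (uk + m + 2) with hN
  have hN2 : uk + m + 2 ≤ 2 ^ N := Nat.le_pow_clog (by norm_num) _
  have hN3 : 3 ≤ N := by
    have := (Nat.lt_clog_iff_pow_lt (by norm_num)).mpr (show 2 ^ 2 < uk + m + 2 by omega)
    omega
  rw [hE]
  have hA0 : (0:ℝ) < (2:ℝ) ^ (-(uk : ℤ)) := two_zpow_pos' _
  have hAne : ((2:ℝ) ^ (-(uk : ℤ))) ≠ 0 := ne_of_gt hA0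
  have hAB : (2:ℝ) ^ (-(uk : ℤ)) ≤ (2:ℝ) ^ ((m : ℤ) - 1) :=
    zpow_le_zpow_right₀ one_le_two (by omega)
  have hxS : x ∈ Icc ((2:ℝ) ^ (-(uk : ℤ))) ((2:ℝ) ^ ((m : ℤ) - 1)) :=
    ⟨hx.1, le_trans hx.2 (zpow_le_zpow_right₀ one_le_two (by omega))⟩
  obtain ⟨hc, hmo, h0⟩ := NRd_props m uk N
  -- convexity of `NRe m N` on `S`
  have heconv : ConvexOn ℝ (Icc ((2:ℝ) ^ (-(uk : ℤ))) ((2:ℝ) ^ ((m : ℤ) - 1))) (NRe m N) := by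
    have hsub : Icc ((2:ℝ) ^ (-(uk : ℤ))) ((2:ℝ) ^ ((m : ℤ) - 1)) ⊆ Ioi (0:ℝ) :=
      fun y hy => lt_of_lt_of_le (two_zpow_pos' _) hy.1
    have h1 : ConvexOn ℝ (Icc ((2:ℝ) ^ (-(uk : ℤ))) ((2:ℝ) ^ ((m : ℤ) - 1)))
        (fun y : ℝ => y ^ (-1 : ℤ)) := (convexOn_zpow (-1)).subset hsub (convex_Icc _ _)
    have h2 := h1.smul (c := (2:ℝ) ^ (-(2 ^ N : ℤ))) (two_zpow_pos' _).le
    have h3 := h2.add hc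
    refine h3.congr fun y hy => ?_
    have hy0 : y ≠ 0 := ne_of_gt (lt_of_lt_of_le (two_zpow_pos' _) hy.1)
    show (2:ℝ) ^ (-(2 ^ N : ℤ)) • (y ^ (-1 : ℤ)) + NRd m N y = NRe m N y
    rw [NRd, smul_eq_mul, show (y:ℝ) ^ (-1:ℤ) = y⁻¹ from zpow_neg_one y]
    field_simp
    ring
  have hseg : x ∈ segment ℝ ((2:ℝ) ^ (-(uk : ℤ))) ((2:ℝ) ^ ((m : ℤ) - 1)) := by
    rw [segment_eq_Icc hAB]; exact hxS
  have hmax := heconv.le_on_segment (left_mem_Icc.mpr hAB) (right_mem_Icc.mpr hAB) hseg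
  have hBval : NRe m N ((2:ℝ) ^ ((m : ℤ) - 1)) = (2:ℝ) ^ (-(m : ℤ)) := NRe_right m N
  -- bound at the left endpoint
  have hAval : NRe m N ((2:ℝ) ^ (-(uk : ℤ))) ≤ (2:ℝ) ^ (-(m : ℤ)) := by
    have hsplit : NRe m N ((2:ℝ) ^ (-(uk : ℤ))) =
        (2:ℝ) ^ (-(2 ^ N : ℤ)) / (2:ℝ) ^ (-(uk : ℤ)) + NRd m N ((2:ℝ) ^ (-(uk : ℤ))) := by
      rw [NRd]; ring
    have hdiv : (2:ℝ) ^ (-(2 ^ N : ℤ)) / (2:ℝ) ^ (-(uk : ℤ)) ≤ (2:ℝ) ^ (-(m : ℤ) - 2) := by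
      rw [div_eq_mul_inv, ← zpow_neg, ← zpow_add₀ (by norm_num : (2:ℝ) ≠ 0)]
      apply zpow_le_zpow_right₀ one_le_two
      have : ((uk : ℤ)) + m + 2 ≤ (2:ℤ) ^ N := by exact_mod_cast hN2
      linarith
    have hd := NRd_left m uk huk hm2 hN3
    have he1 : (2:ℝ) ^ (-(m : ℤ)) = 2 * (2:ℝ) ^ (-((m : ℤ) + 1)) := by
      have h := zpow_add₀ (by norm_num : (2:ℝ) ≠ 0) (1:ℤ) (-((m:ℤ)+1))
      rw [zpow_one] at h
      rw [show -(m:ℤ) = 1 + -((m:ℤ)+1) by ring, h]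
    have he2 : (2:ℝ) ^ (-(m : ℤ) - 2) = (2:ℝ) ^ (-((m : ℤ) + 1)) / 2 := by
      have h := zpow_add₀ (by norm_num : (2:ℝ) ≠ 0) (-((m:ℤ)+1)) (-1:ℤ)
      rw [show ((2:ℝ) ^ (-1:ℤ)) = 2⁻¹ from zpow_neg_one 2, ← div_eq_mul_inv] at h
      rw [show -(m:ℤ) - 2 = -((m:ℤ)+1) + (-1) by ring, h]
    rw [hsplit, he1]
    rw [he2] at hdiv
    linarith
  exact le_trans hmax (max_le hAval (le_of_eq hBval))
end
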